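/- Let n ≥ 2, Ω ⊆ ℝⁿ open, and v a measurable function on Ω. Define the homogeneous Morrey–Campanato type norms ‖v‖²_{Ẋ} = sup_{R>0} R^{-2} ∫_{Ω∩{|x|=R}} |v|² dS and ‖v‖²_{Ẏ} = sup_{R>0} R^{-1} ∫_{Ω∩{|x|≤R}} |v|² dx. Then ‖ |x|^{-1} v ‖_{Ẏ} ≤ ‖v‖_{Ẋ}. -/

import Mathlib

open MeasureTheory ENNReal

/-- The surface integral `∫_{Ω ∩ {|x| = R}} |v|² dS`, expressed in polar coordinates via the
surface measure `volume.toSphere` on the unit sphere. -/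
noncomputable def sphereInt (n : ℕ) (Ω : Set (EuclideanSpace ℝ (Fin n)))
    (v : EuclideanSpace ℝ (Fin n) → ℂ) (R : ℝ) : ℝ≥0∞ :=
  ENNReal.ofReal (R ^ (n - 1)) *
    ∫⁻ ω : Metric.sphere (0 : EuclideanSpace ℝ (Fin n)) 1,
      Ω.indicator (fun x => (‖v x‖₊ : ℝ≥0∞) ^ 2) (R • (ω : EuclideanSpace ℝ (Fin n)))
      ∂((volume : Measure (EuclideanSpace ℝ (Fin n))).toSphere)

/-- The square of the homogeneous Morrey–Campanato trace norm
`‖v‖²_{Ẋ} = sup_{R>0} R^{-2} ∫_{Ω ∩ {|x|=R}} |v|² dS`. -/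
noncomputable def Xnorm2 (n : ℕ) (Ω : Set (EuclideanSpace ℝ (Fin n)))
    (v : EuclideanSpace ℝ (Fin n) → ℂ) : ℝ≥0∞ :=
  ⨆ R ∈ Set.Ioi (0 : ℝ), (ENNReal.ofReal (R ^ 2))⁻¹ * sphereInt n Ω v R

/-- The square of the homogeneous Morrey–Campanato norm
`‖v‖²_{Ẏ} = sup_{R>0} R^{-1} ∫_{Ω ∩ {|x| ≤ R}} |v|² dx`. -/
noncomputable def Ynorm2 (n : ℕ) (Ω : Set (EuclideanSpace ℝ (Fin n)))
    (v : EuclideanSpace ℝ (Fin n) → ℂ) : ℝ≥0∞ :=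
  ⨆ R ∈ Set.Ioi (0 : ℝ), (ENNReal.ofReal R)⁻¹ *
    ∫⁻ x in Ω ∩ Metric.closedBall (0 : EuclideanSpace ℝ (Fin n)) R, (‖v x‖₊ : ℝ≥0∞) ^ 2

section Aux
open Metric Set NNReal

variable {n : ℕ}

local notation "E" => EuclideanSpace ℝ (Fin n)

theorem Ynorm2_le_Xnorm2 (hn : 2 ≤ n) (Ω : Set E)
    (hΩ : IsOpen Ω) (v : E → ℂ) (hv : Measurable v) :
    (Ynorm2 n Ω fun x => (‖x‖⁻¹ : ℝ) • v x) ≤ Xnorm2 n Ω v := by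
  haveI : Nonempty (Fin n) := Fin.pos_iff_nonempty.mp (by omega)
  haveI : Nontrivial E := inferInstance
  set f : E → ℝ≥0∞ := fun x => ((‖x‖₊⁻¹ * ‖v x‖₊ : ℝ≥0) : ℝ≥0∞) ^ 2 with hf
  have hfmeas : Measurable f := by
    apply Measurable.pow_const
    exact ((measurable_nnnorm.inv.mul hv.nnnorm).coe_nnreal_ennreal)
  -- the key estimate for each R
  have key : ∀ R : ℝ, 0 < R →
      (∫⁻ x in Ω ∩ closedBall (0 : E) R, f x) ≤ Xnorm2 n Ω v * ENNReal.ofReal R := by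
    intro R hR
    set G : E → ℝ≥0∞ := (Ω ∩ closedBall (0 : E) R).indicator f with hG
    have hGmeas : Measurable G :=
      hfmeas.indicator ((hΩ.measurableSet).inter measurableSet_closedBall)
    have hprodmeas : Measurable fun p : sphere (0 : E) 1 × Ioi (0 : ℝ) =>
        G ((p.2 : ℝ) • (p.1 : E)) :=
      hGmeas.comp ((continuous_subtype_val.comp continuous_snd).smul
        (continuous_subtype_val.comp continuous_fst)).measurable
    have hdim : Module.finrank ℝ E = n := finrank_euclideanSpace_fin
    have step1 : (∫⁻ x in Ω ∩ closedBall (0 : E) R, f x)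
        = ∫⁻ r in Ioi (0 : ℝ), ENNReal.ofReal (r ^ (n - 1)) *
            ∫⁻ ω : sphere (0 : E) 1, G (r • (ω : E)) ∂(volume : Measure E).toSphere := by
      have hmp := (volume : Measure E).measurePreserving_homeomorphUnitSphereProd
      have hcomp := hmp.lintegral_comp hprodmeas
      have heq : ∀ x : ({0}ᶜ : Set E),
          G ((((homeomorphUnitSphereProd E) x).2 : ℝ) •
            (((homeomorphUnitSphereProd E) x).1 : E)) = G (x : E) := by
        intro x
        have h2 := (homeomorphUnitSphereProd E).symm_apply_apply x
        conv_rhs => rw [← h2]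
        rw [homeomorphUnitSphereProd_symm_apply_coe]
      calc ∫⁻ x in Ω ∩ closedBall (0 : E) R, f x
          = ∫⁻ x : E, G x := (lintegral_indicator
              ((hΩ.measurableSet).inter measurableSet_closedBall) f).symm
        _ = ∫⁻ x : ({0}ᶜ : Set E), G (x : E) ∂((volume : Measure E).comap (↑)) := by
            rw [lintegral_subtype_comap (measurableSet_singleton (0 : E)).compl,
              MeasureTheory.restrict_compl_singleton]
        _ = ∫⁻ x : ({0}ᶜ : Set E),
              G ((((homeomorphUnitSphereProd E) x).2 : ℝ) •
                (((homeomorphUnitSphereProd E) x).1 : E)) ∂((volume : Measure E).comap (↑)) := by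
            exact lintegral_congr fun x => (heq x).symm
        _ = ∫⁻ p : sphere (0 : E) 1 × Ioi (0 : ℝ), G ((p.2 : ℝ) • (p.1 : E))
              ∂((volume : Measure E).toSphere.prod
                (Measure.volumeIoiPow (Module.finrank ℝ E - 1))) := hcomp
        _ = ∫⁻ r : Ioi (0 : ℝ), ∫⁻ ω : sphere (0 : E) 1, G ((r : ℝ) • (ω : E))
              ∂(volume : Measure E).toSphere ∂(Measure.volumeIoiPow (n - 1)) := by
            rw [hdim]
            exact lintegral_prod_symm _ hprodmeas.aemeasurable
        _ = ∫⁻ r in Ioi (0 : ℝ), ENNReal.ofReal (r ^ (n - 1)) *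
              ∫⁻ ω : sphere (0 : E) 1, G (r • (ω : E)) ∂(volume : Measure E).toSphere := by
            rw [Measure.volumeIoiPow,
              lintegral_withDensity_eq_lintegral_mul_non_measurable _
                ((measurable_subtype_coe.pow_const _).ennreal_ofReal)
                (Filter.Eventually.of_forall fun r => ENNReal.ofReal_lt_top)]
            exact lintegral_subtype_comap measurableSet_Ioi
              (fun r => ENNReal.ofReal (r ^ (n - 1)) *
                ∫⁻ ω : sphere (0 : E) 1, G (r • (ω : E)) ∂(volume : Measure E).toSphere)
    have step2 : ∀ r ∈ Ioi (0 : ℝ),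
        ENNReal.ofReal (r ^ (n - 1)) *
            (∫⁻ ω : sphere (0 : E) 1, G (r • (ω : E)) ∂(volume : Measure E).toSphere)
          = (Ioc (0 : ℝ) R).indicator
              (fun r => (ENNReal.ofReal (r ^ 2))⁻¹ * sphereInt n Ω v r) r := by
      intro r hr
      have hr : (0 : ℝ) < r := hr
      have hnorm : ∀ ω : sphere (0 : E) 1, ‖r • (ω : E)‖ = r := fun ω => by
        rw [norm_smul, mem_sphere_zero_iff_norm.mp ω.2, mul_one, Real.norm_eq_abs,
          abs_of_pos hr]
      by_cases hrR : r ≤ R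
      · rw [indicator_of_mem (Set.mem_Ioc.mpr ⟨hr, hrR⟩)]
        have hnn : ∀ ω : sphere (0 : E) 1, ‖r • (ω : E)‖₊ = r.toNNReal := fun ω =>
          NNReal.coe_injective (by
            simp [coe_nnnorm, hnorm ω, Real.coe_toNNReal _ hr.le])
        have hGω : ∀ ω : sphere (0 : E) 1, G (r • (ω : E)) =
            ((r.toNNReal⁻¹ : ℝ≥0) : ℝ≥0∞) ^ 2 *
              Ω.indicator (fun x => (‖v x‖₊ : ℝ≥0∞) ^ 2) (r • (ω : E)) := by
          intro ω
          have hball : (r • (ω : E)) ∈ closedBall (0 : E) R := by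
            rw [mem_closedBall_zero_iff, hnorm ω]; exact hrR
          by_cases hΩm : (r • (ω : E)) ∈ Ω
          · rw [hG, indicator_of_mem (Set.mem_inter hΩm hball), indicator_of_mem hΩm]
            show ((‖r • (ω : E)‖₊⁻¹ * ‖v (r • (ω : E))‖₊ : ℝ≥0) : ℝ≥0∞) ^ 2 = _
            rw [hnn ω, ENNReal.coe_mul, mul_pow]
          · rw [hG, indicator_of_notMem (fun h => hΩm h.1), indicator_of_notMem hΩm,
              mul_zero]
        rw [lintegral_congr hGω, lintegral_const_mul' _ _ (by
          exact ENNReal.pow_ne_top ENNReal.coe_ne_top)]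
        have hc : ((r.toNNReal⁻¹ : ℝ≥0) : ℝ≥0∞) ^ 2 = (ENNReal.ofReal (r ^ 2))⁻¹ := by
          rw [ENNReal.coe_inv (by simpa [Real.toNNReal_eq_zero] using hr),
            ← ENNReal.inv_pow, ENNReal.ofReal_pow hr.le]
          rfl
        rw [hc, sphereInt]
        ring
      · rw [indicator_of_notMem (fun h => hrR h.2)]
        have hz : ∀ ω : sphere (0 : E) 1, G (r • (ω : E)) = 0 := by
          intro ω
          refine indicator_of_notMem (fun h => hrR ?_) f
          have := mem_closedBall_zero_iff.mp h.2
          rwa [hnorm ω] at this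
        rw [lintegral_congr hz, lintegral_zero, mul_zero]
    rw [step1, setLIntegral_congr_fun measurableSet_Ioi step2,
      lintegral_indicator measurableSet_Ioc, Measure.restrict_restrict measurableSet_Ioc,
      inter_eq_left.mpr Ioc_subset_Ioi_self]
    calc (∫⁻ r in Ioc (0 : ℝ) R, (ENNReal.ofReal (r ^ 2))⁻¹ * sphereInt n Ω v r)
        ≤ ∫⁻ _ in Ioc (0 : ℝ) R, Xnorm2 n Ω v := by
          refine setLIntegral_mono' measurableSet_Ioc fun r hrm => ?_
          exact le_biSup (fun R => (ENNReal.ofReal (R ^ 2))⁻¹ * sphereInt n Ω v R) hrm.1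
      _ = Xnorm2 n Ω v * ENNReal.ofReal R := by
          rw [setLIntegral_const, Real.volume_Ioc, sub_zero]
  -- conclude
  rw [Ynorm2]
  refine iSup₂_le fun R hR => ?_
  have hR : (0 : ℝ) < R := hR
  have hint : (∫⁻ x in Ω ∩ closedBall (0 : E) R, (‖(‖x‖⁻¹ : ℝ) • v x‖₊ : ℝ≥0∞) ^ 2)
      = ∫⁻ x in Ω ∩ closedBall (0 : E) R, f x := by
    refine lintegral_congr fun x => ?_
    simp [hf, nnnorm_smul]
  rw [hint]
  calc (ENNReal.ofReal R)⁻¹ * ∫⁻ x in Ω ∩ closedBall (0 : E) R, f x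
      ≤ (ENNReal.ofReal R)⁻¹ * (Xnorm2 n Ω v * ENNReal.ofReal R) :=
        mul_le_mul_right (key R hR) _
    _ = Xnorm2 n Ω v * ((ENNReal.ofReal R)⁻¹ * ENNReal.ofReal R) := by ring
    _ = Xnorm2 n Ω v := by
        rw [ENNReal.inv_mul_cancel (by simpa using hR) ENNReal.ofReal_ne_top, mul_one]

end Aux

/-- For `n ≥ 2`, `Ω ⊆ ℝⁿ` open and `v` measurable: `‖ |x|⁻¹ v ‖_{Ẏ} ≤ ‖v‖_{Ẋ}`. -/
theorem stmt_5 (n : ℕ) (hn : 2 ≤ n) (Ω : Set (EuclideanSpace ℝ (Fin n))) (hΩ : IsOpen Ω)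
    (v : EuclideanSpace ℝ (Fin n) → ℂ) (hv : Measurable v) :
    (Ynorm2 n Ω fun x => (‖x‖⁻¹ : ℝ) • v x) ^ (1 / 2 : ℝ)
      ≤ (Xnorm2 n Ω v) ^ (1 / 2 : ℝ) := by
  exact ENNReal.rpow_le_rpow (Ynorm2_le_Xnorm2 hn Ω hΩ v hv) (by norm_num)
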